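/- arXiv:0903.1882 — 3 statements merged into one kernel-verified Lean document; each statement's English description precedes it below -/
import Mathlib

section
/- Let V be a real inner product space, N \geq 1, \Sigma = [\sigma_{k,i}] an N\times N real matrix, and \tilde{\gamma}_1,...,\tilde{\gamma}_N real numbers such that E = \Sigma - diag(\tilde{\gamma}) is diagonally stable, witnessed by a diagonal D = diag(d_1,...,d_N) with d_k > 0 and D E + E^T D \leq -2\alpha I_N for some \alpha > 0. Suppose y_1,...,y_N, w_1,...,w_N \in V satisfy \tilde{\gamma}_k \|y_k\|^2 \leq \langle y_k, u_k \rangle for each k, where u_k = w_k + \sum_{i=1}^N \sigma_{k,i} y_i. Then (\sum_k \|y_k\|^2)^{1/2} \leq (\max_k d_k / \alpha) (\sum_k \|w_k\|^2)^{1/2}. -/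
open Matrix

/-- **"Vidyasagar lemma" step.** If `E = Σ - diag(γ̃)` is diagonally
stable with witness `D = diag(d)`, `d > 0`, `D E + Eᵀ D ≤ -2α I`, and the vectors
`y_k, w_k` of a real inner product space satisfy the dissipation inequalities
`γ̃ₖ ‖y_k‖² ≤ ⟨y_k, u_k⟩` with `u_k = w_k + ∑ᵢ σ_{k,i} y_i`, then
`(∑ ‖y_k‖²)^{1/2} ≤ (maxₖ d_k / α) (∑ ‖w_k‖²)^{1/2}`. -/
theorem statement6 {V : Type*} [NormedAddCommGroup V] [InnerProductSpace ℝ V]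
    {N : ℕ} [NeZero N] (S : Matrix (Fin N) (Fin N) ℝ) (γt d : Fin N → ℝ) (α : ℝ)
    (hd : ∀ k, 0 < d k) (hα : 0 < α)
    (hE : ∀ z : Fin N → ℝ,
      z ⬝ᵥ ((Matrix.diagonal d * (S - Matrix.diagonal γt)
          + (S - Matrix.diagonal γt)ᵀ * Matrix.diagonal d) *ᵥ z)
        ≤ -2 * α * ∑ k, (z k) ^ 2)
    (y w : Fin N → V)
    (hpass : ∀ k, γt k * ‖y k‖ ^ 2 ≤ (inner ℝ (y k) (w k + ∑ i, S k i • y i) : ℝ)) :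
    Real.sqrt (∑ k, ‖y k‖ ^ 2) ≤
      ((Finset.univ.sup' Finset.univ_nonempty d) / α) * Real.sqrt (∑ k, ‖w k‖ ^ 2) := by
  classical
  set E : Matrix (Fin N) (Fin N) ℝ := S - Matrix.diagonal γt with hEdef
  set M : Matrix (Fin N) (Fin N) ℝ := Matrix.diagonal d * E + Eᵀ * Matrix.diagonal d with hMdef
  have hfd : FiniteDimensional ℝ ↥(Submodule.span ℝ (Set.range y)) :=
    FiniteDimensional.span_of_finite ℝ (Set.finite_range y)
  set W := Submodule.span ℝ (Set.range y) with hW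
  let b := stdOrthonormalBasis ℝ W
  let yW : Fin N → W := fun k => ⟨y k, Submodule.subset_span (Set.mem_range_self k)⟩
  let c : Fin N → Fin (Module.finrank ℝ W) → ℝ := fun k j => b.repr (yW k) j
  have hinner : ∀ k i, (inner ℝ (y k) (y i) : ℝ) = ∑ j, c k j * c i j := by
    intro k i
    have h1 : (inner ℝ (y k) (y i) : ℝ) = inner ℝ (yW k) (yW i) :=
      (W.coe_inner (yW k) (yW i)).symm
    rw [h1, ← b.repr.inner_map_map (yW k) (yW i), PiLp.inner_apply]
    simp [c, RCLike.inner_apply, mul_comm]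
  have hnorm : ∀ k, ‖y k‖ ^ 2 = ∑ j, c k j ^ 2 := by
    intro k
    have := hinner k k
    rw [real_inner_self_eq_norm_sq] at this
    simpa [sq] using this
  -- trace inequality
  have htrace : ∑ k, ∑ i, M k i * (inner ℝ (y k) (y i) : ℝ) ≤ -2 * α * ∑ k, ‖y k‖ ^ 2 := by
    have hswap : ∑ k, ∑ i, M k i * (inner ℝ (y k) (y i) : ℝ)
        = ∑ j, (fun k => c k j) ⬝ᵥ (M *ᵥ fun k => c k j) := by
      calc ∑ k, ∑ i, M k i * (inner ℝ (y k) (y i) : ℝ)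
          = ∑ k, ∑ i, ∑ j, M k i * (c k j * c i j) := by
            simp only [hinner, Finset.mul_sum]
        _ = ∑ k, ∑ j, ∑ i, M k i * (c k j * c i j) := by
            exact Finset.sum_congr rfl fun k _ => Finset.sum_comm
        _ = ∑ j, ∑ k, ∑ i, M k i * (c k j * c i j) := Finset.sum_comm
        _ = ∑ j, (fun k => c k j) ⬝ᵥ (M *ᵥ fun k => c k j) := by
            simp only [dotProduct, mulVec, Finset.mul_sum]
            exact Finset.sum_congr rfl fun j _ => Finset.sum_congr rfl fun k _ =>
              Finset.sum_congr rfl fun i _ => by ring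
    rw [hswap]
    calc ∑ j, (fun k => c k j) ⬝ᵥ (M *ᵥ fun k => c k j)
        ≤ ∑ j, -2 * α * ∑ k, (c k j) ^ 2 :=
          Finset.sum_le_sum fun j _ => hE fun k => c k j
      _ = -2 * α * ∑ k, ‖y k‖ ^ 2 := by
          rw [← Finset.mul_sum, Finset.sum_comm]
          congr 1
          exact Finset.sum_congr rfl fun k _ => (hnorm k).symm
  -- rewrite the trace as the passivity combination
  have hsymm : ∀ k i, (inner ℝ (y i) (y k) : ℝ) = inner ℝ (y k) (y i) := fun k i =>
    real_inner_comm _ _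
  have hMent : ∀ k i, M k i = d k * E k i + E i k * d i := by
    intro k i
    simp [hMdef, Matrix.mul_apply, Matrix.diagonal, Matrix.transpose_apply,
      Finset.sum_ite_eq, Finset.sum_ite_eq']
  have hEq : ∑ k, ∑ i, M k i * (inner ℝ (y k) (y i) : ℝ)
      = 2 * ∑ k, d k * (∑ i, S k i * (inner ℝ (y k) (y i) : ℝ) - γt k * ‖y k‖ ^ 2) := by
    have h1 : ∑ k, ∑ i, (E i k * d i) * (inner ℝ (y k) (y i) : ℝ)
        = ∑ k, ∑ i, (d k * E k i) * (inner ℝ (y k) (y i) : ℝ) := by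
      rw [Finset.sum_comm]
      exact Finset.sum_congr rfl fun k _ => Finset.sum_congr rfl fun i _ => by
        rw [hsymm k i]; ring
    calc ∑ k, ∑ i, M k i * (inner ℝ (y k) (y i) : ℝ)
        = ∑ k, ∑ i, ((d k * E k i) * (inner ℝ (y k) (y i) : ℝ)
            + (E i k * d i) * (inner ℝ (y k) (y i) : ℝ)) := by
          exact Finset.sum_congr rfl fun k _ => Finset.sum_congr rfl fun i _ => by
            rw [hMent k i]; ring
      _ = ∑ k, ∑ i, (d k * E k i) * (inner ℝ (y k) (y i) : ℝ)
            + ∑ k, ∑ i, (E i k * d i) * (inner ℝ (y k) (y i) : ℝ) := by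
          rw [← Finset.sum_add_distrib]
          exact Finset.sum_congr rfl fun k _ => Finset.sum_add_distrib
      _ = 2 * ∑ k, ∑ i, (d k * E k i) * (inner ℝ (y k) (y i) : ℝ) := by
          rw [h1]; ring
      _ = 2 * ∑ k, d k * (∑ i, S k i * (inner ℝ (y k) (y i) : ℝ) - γt k * ‖y k‖ ^ 2) := by
          congr 1
          refine Finset.sum_congr rfl fun k _ => ?_
          have : ∑ i, (d k * E k i) * (inner ℝ (y k) (y i) : ℝ)
              = d k * ∑ i, E k i * (inner ℝ (y k) (y i) : ℝ) := by
            rw [Finset.mul_sum]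
            exact Finset.sum_congr rfl fun i _ => by ring
          rw [this]
          congr 1
          have hsplit : ∀ i, E k i * (inner ℝ (y k) (y i) : ℝ)
              = S k i * (inner ℝ (y k) (y i) : ℝ)
                - (if k = i then γt k * (inner ℝ (y k) (y i) : ℝ) else 0) := by
            intro i
            by_cases h : k = i <;> simp [hEdef, Matrix.diagonal, h, sub_mul]
          rw [Finset.sum_congr rfl fun i _ => hsplit i, Finset.sum_sub_distrib,
            Finset.sum_ite_eq Finset.univ k
              (fun i => γt k * (inner ℝ (y k) (y i) : ℝ))]
          simp [real_inner_self_eq_norm_sq]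
  -- passivity combination
  have hpass' : ∀ k, -(inner ℝ (y k) (w k) : ℝ)
      ≤ ∑ i, S k i * (inner ℝ (y k) (y i) : ℝ) - γt k * ‖y k‖ ^ 2 := by
    intro k
    have h := hpass k
    rw [inner_add_right, inner_sum] at h
    simp only [real_inner_smul_right] at h
    linarith
  have hkey : α * ∑ k, ‖y k‖ ^ 2 ≤ ∑ k, d k * (inner ℝ (y k) (w k) : ℝ) := by
    have h1 : -2 * (∑ k, d k * (inner ℝ (y k) (w k) : ℝ))
        ≤ 2 * ∑ k, d k * (∑ i, S k i * (inner ℝ (y k) (y i) : ℝ) - γt k * ‖y k‖ ^ 2) := by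
      have : ∑ k, d k * (-(inner ℝ (y k) (w k) : ℝ))
          ≤ ∑ k, d k * (∑ i, S k i * (inner ℝ (y k) (y i) : ℝ) - γt k * ‖y k‖ ^ 2) :=
        Finset.sum_le_sum fun k _ =>
          mul_le_mul_of_nonneg_left (hpass' k) (hd k).le
      have h2 : ∑ k, d k * (-(inner ℝ (y k) (w k) : ℝ))
          = -(∑ k, d k * (inner ℝ (y k) (w k) : ℝ)) := by
        rw [← Finset.sum_neg_distrib]
        exact Finset.sum_congr rfl fun k _ => by ring
      nlinarith [this]
    rw [← hEq] at h1
    nlinarith [htrace]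
  -- Cauchy-Schwarz and finish
  set dmax := Finset.univ.sup' Finset.univ_nonempty d with hdm
  have hdmax : ∀ k, d k ≤ dmax := fun k => Finset.le_sup' d (Finset.mem_univ k)
  have hdmaxpos : 0 < dmax := lt_of_lt_of_le (hd ⟨0, Nat.pos_of_ne_zero (NeZero.ne N)⟩)
    (hdmax _)
  have hcs : ∑ k, d k * (inner ℝ (y k) (w k) : ℝ)
      ≤ dmax * (Real.sqrt (∑ k, ‖y k‖ ^ 2) * Real.sqrt (∑ k, ‖w k‖ ^ 2)) := by
    have h1 : ∑ k, d k * (inner ℝ (y k) (w k) : ℝ) ≤ dmax * ∑ k, ‖y k‖ * ‖w k‖ := by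
      rw [Finset.mul_sum]
      refine Finset.sum_le_sum fun k _ => ?_
      have hb : (inner ℝ (y k) (w k) : ℝ) ≤ ‖y k‖ * ‖w k‖ := real_inner_le_norm _ _
      by_cases h : (inner ℝ (y k) (w k) : ℝ) ≤ 0
      · calc d k * (inner ℝ (y k) (w k) : ℝ) ≤ 0 := mul_nonpos_of_nonneg_of_nonpos (hd k).le h
          _ ≤ dmax * (‖y k‖ * ‖w k‖) := by positivity
      · push_neg at h
        calc d k * (inner ℝ (y k) (w k) : ℝ) ≤ dmax * (inner ℝ (y k) (w k) : ℝ) :=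
              mul_le_mul_of_nonneg_right (hdmax k) h.le
          _ ≤ dmax * (‖y k‖ * ‖w k‖) := mul_le_mul_of_nonneg_left hb hdmaxpos.le
    refine h1.trans (mul_le_mul_of_nonneg_left ?_ hdmaxpos.le)
    have h2 : (∑ k, ‖y k‖ * ‖w k‖) ^ 2 ≤ (∑ k, ‖y k‖ ^ 2) * ∑ k, ‖w k‖ ^ 2 :=
      Finset.sum_mul_sq_le_sq_mul_sq _ _ _
    have hnn : (0:ℝ) ≤ ∑ k, ‖y k‖ * ‖w k‖ :=
      Finset.sum_nonneg fun k _ => by positivity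
    calc ∑ k, ‖y k‖ * ‖w k‖ = Real.sqrt ((∑ k, ‖y k‖ * ‖w k‖) ^ 2) :=
          (Real.sqrt_sq hnn).symm
      _ ≤ Real.sqrt ((∑ k, ‖y k‖ ^ 2) * ∑ k, ‖w k‖ ^ 2) := Real.sqrt_le_sqrt h2
      _ = Real.sqrt (∑ k, ‖y k‖ ^ 2) * Real.sqrt (∑ k, ‖w k‖ ^ 2) := by
          rw [Real.sqrt_mul (Finset.sum_nonneg fun k _ => by positivity)]
  set A := Real.sqrt (∑ k, ‖y k‖ ^ 2) with hA
  set B := Real.sqrt (∑ k, ‖w k‖ ^ 2) with hB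
  have hA2 : A ^ 2 = ∑ k, ‖y k‖ ^ 2 :=
    Real.sq_sqrt (Finset.sum_nonneg fun k _ => by positivity)
  have hAnn : 0 ≤ A := Real.sqrt_nonneg _
  have hBnn : 0 ≤ B := Real.sqrt_nonneg _
  have hfin : α * A ^ 2 ≤ dmax * (A * B) := by
    rw [hA2]; exact hkey.trans hcs
  rcases eq_or_lt_of_le hAnn with h0 | h0
  · rw [← h0]; positivity
  · rw [div_mul_eq_mul_div, le_div_iff₀ hα]
    nlinarith
end

section
/- Let L be an n\times n Laplacian matrix (nonpositive off-diagonal entries, L 1_n = 0) that additionally satisfies 1_n^T L = 0, and let \lambda be its algebraic connectivity. Let h : \mathbb{R} \to \mathbb{R} be \xi-relaxed cocoercive with \xi > 0, and let x \in \mathbb{R}^n and y \in \mathbb{R}^n with y_i = h(x_i) for all i. Then y^T L x \geq \xi \lambda \|P y\|^2, where P = I_n - (1/n) 1_n 1_n^T. -/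
open Matrix

section aux
variable {ξ : ℝ} {h : ℝ → ℝ}

lemma coco_mono (hξ : 0 < ξ)
    (hcoco : ∀ a b : ℝ, ξ * (h a - h b) ^ 2 ≤ (a - b) * (h a - h b))
    {a b : ℝ} (hab : a ≤ b) : h a ≤ h b := by
  by_contra hc
  push_neg at hc
  nlinarith [hcoco b a, mul_pos hξ (mul_pos (sub_pos.2 hc) (sub_pos.2 hc)),
    mul_nonneg (sub_nonneg.2 hab) (sub_pos.2 hc).le]

lemma coco_lip (hξ : 0 < ξ)
    (hcoco : ∀ a b : ℝ, ξ * (h a - h b) ^ 2 ≤ (a - b) * (h a - h b))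
    {a b : ℝ} (hab : a ≤ b) : ξ * (h b - h a) ≤ b - a := by
  rcases (coco_mono hξ hcoco hab).eq_or_lt with he | hlt
  · rw [← he]; simpa using sub_nonneg.mpr hab
  · have h2 : (ξ * (h b - h a)) * (h b - h a) ≤ (b - a) * (h b - h a) := by
      nlinarith [hcoco b a]
    exact le_of_mul_le_mul_right h2 (by linarith)

lemma exists_potential (hξ : 0 < ξ)
    (hcoco : ∀ a b : ℝ, ξ * (h a - h b) ^ 2 ≤ (a - b) * (h a - h b))
    (S : Finset ℝ) :
    ∃ Φ : ℝ → ℝ, ∀ a ∈ S, ∀ b ∈ S,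
      Φ a - Φ b + ξ / 2 * (h a - h b) ^ 2 ≤ h a * (a - b) := by
  induction S using Finset.strongInduction with
  | _ S ih =>
    rcases S.eq_empty_or_nonempty with rfl | hne
    · exact ⟨0, by simp⟩
    · have hmS : S.max' hne ∈ S := S.max'_mem hne
      set m := S.max' hne with hm
      rcases (S.erase m).eq_empty_or_nonempty with he | hne'
      · refine ⟨0, ?_⟩
        intro a ha b hb
        have ha' : a = m := by
          by_contra hc
          exact (Finset.eq_empty_iff_forall_notMem.mp he) a (Finset.mem_erase.mpr ⟨hc, ha⟩)
        have hb' : b = m := by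
          by_contra hc
          exact (Finset.eq_empty_iff_forall_notMem.mp he) b (Finset.mem_erase.mpr ⟨hc, hb⟩)
        subst ha'; subst hb'; simp
      · obtain ⟨Φ', hΦ'⟩ := ih (S.erase m) (Finset.erase_ssubset hmS)
        have hm'S' : (S.erase m).max' hne' ∈ S.erase m := (S.erase m).max'_mem hne'
        set m' := (S.erase m).max' hne' with hm'
        have hm'S : m' ∈ S := Finset.mem_of_mem_erase hm'S'
        have hm'm : m' ≤ m := S.le_max' m' hm'S
        refine ⟨fun t => if t = m then Φ' m' + h m' * (m - m') + ξ / 2 * (h m - h m') ^ 2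
          else Φ' t, ?_⟩
        intro a ha b hb
        by_cases ham : a = m <;> by_cases hbm : b = m
        · subst ham; subst hbm; simp
        · have hbS' : b ∈ S.erase m := Finset.mem_erase.mpr ⟨hbm, hb⟩
          have hbm' : b ≤ m' := (S.erase m).le_max' b hbS'
          have IH := hΦ' m' hm'S' b hbS'
          have key : 0 ≤ (h m - h m') * ((m - b) - ξ * (h m - h b)) :=
            mul_nonneg (sub_nonneg.2 (coco_mono hξ hcoco hm'm))
              (by have := coco_lip hξ hcoco (hbm'.trans hm'm); linarith)
          subst ham
          simp only [ite_true, if_pos rfl, if_neg hbm]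
          nlinarith [IH, key]
        · have haS' : a ∈ S.erase m := Finset.mem_erase.mpr ⟨ham, ha⟩
          have ham' : a ≤ m' := (S.erase m).le_max' a haS'
          have IH := hΦ' a haS' m' hm'S'
          have key : 0 ≤ (h m' - h a) * ((m - m') - ξ * (h m - h m')) :=
            mul_nonneg (sub_nonneg.2 (coco_mono hξ hcoco ham'))
              (by have := coco_lip hξ hcoco hm'm; linarith)
          subst hbm
          simp only [ite_true, if_pos rfl, if_neg ham]
          nlinarith [IH, key]
        · simp only [if_neg ham, if_neg hbm]
          exact hΦ' a (Finset.mem_erase.mpr ⟨ham, ha⟩) b (Finset.mem_erase.mpr ⟨hbm, hb⟩)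

end aux

/-- Algebraic connectivity of a (possibly non-symmetric) matrix `L`:
`min { zᵀ L z : zᵀ 1 = 0, ‖z‖ = 1 }`. -/
noncomputable def algConn {n : ℕ} (L : Matrix (Fin n) (Fin n) ℝ) : ℝ :=
  sInf {r : ℝ | ∃ z : Fin n → ℝ,
    (∑ i, z i) = 0 ∧ (∑ i, (z i) ^ 2) = 1 ∧ r = z ⬝ᵥ (L *ᵥ z)}

/-- For a balanced Laplacian `L` (nonpositive off-diagonal entries,
`L 1ₙ = 0`, `1ₙᵀ L = 0`) with algebraic connectivity `λ`, and a `ξ`-relaxed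
cocoercive function `h` with `ξ > 0`, if `yᵢ = h(xᵢ)` then
`yᵀ L x ≥ ξ λ ‖P y‖²`, where `P = Iₙ - (1/n) 1ₙ1ₙᵀ`. -/
theorem statement9 {n : ℕ}
    (L : Matrix (Fin n) (Fin n) ℝ)
    (hoff : ∀ i j, i ≠ j → L i j ≤ 0)
    (hrow : L *ᵥ (fun _ => (1 : ℝ)) = 0)
    (hcol : (fun _ => (1 : ℝ)) ᵥ* L = 0)
    (ξ : ℝ) (hξ : 0 < ξ) (h : ℝ → ℝ)
    (hcoco : ∀ a b : ℝ, ξ * (h a - h b) ^ 2 ≤ (a - b) * (h a - h b))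
    (x y : Fin n → ℝ) (hxy : ∀ i, y i = h (x i)) :
    let P : Matrix (Fin n) (Fin n) ℝ :=
      1 - ((n : ℝ)⁻¹) • Matrix.of fun _ _ => (1 : ℝ)
    y ⬝ᵥ (L *ᵥ x) ≥ ξ * algConn L * ∑ i, ((P *ᵥ y) i) ^ 2 := by
  intro P
  have rowsum : ∀ i, ∑ j, L i j = 0 := by
    intro i
    have := congrFun hrow i
    simpa [mulVec, dotProduct] using this
  have colsum : ∀ j, ∑ i, L i j = 0 := by
    intro j
    have := congrFun hcol j
    simpa [vecMul, dotProduct] using this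
  have zero1 : ∀ f : Fin n → ℝ, ∑ i, ∑ j, L i j * f i = 0 := by
    intro f
    refine Finset.sum_eq_zero fun i _ => ?_
    rw [← Finset.sum_mul, rowsum i, zero_mul]
  have zero2 : ∀ f : Fin n → ℝ, ∑ i, ∑ j, L i j * f j = 0 := by
    intro f
    rw [Finset.sum_comm]
    refine Finset.sum_eq_zero fun j _ => ?_
    rw [← Finset.sum_mul, colsum j, zero_mul]
  have expand : ∀ v w : Fin n → ℝ,
      v ⬝ᵥ (L *ᵥ w) = ∑ i, ∑ j, L i j * (v i * w j) := by
    intro v w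
    simp only [dotProduct, mulVec, Finset.mul_sum]
    exact Finset.sum_congr rfl fun i _ => Finset.sum_congr rfl fun j _ => by ring
  have eqA : ∑ i, ∑ j, (-(L i j)) * (y i * (x i - x j)) = y ⬝ᵥ (L *ᵥ x) := by
    have e : ∑ i, ∑ j, (-(L i j)) * (y i * (x i - x j))
        = (∑ i, ∑ j, L i j * (y i * x j)) - ∑ i, ∑ j, L i j * (y i * x i) := by
      rw [← Finset.sum_sub_distrib]
      refine Finset.sum_congr rfl fun i _ => ?_
      rw [← Finset.sum_sub_distrib]
      exact Finset.sum_congr rfl fun j _ => by ring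
    rw [e, zero1 (fun i => y i * x i), expand y x, sub_zero]
  have eqT : ∀ w : Fin n → ℝ,
      ∑ i, ∑ j, (-(L i j)) * ((w i - w j) ^ 2) = 2 * (w ⬝ᵥ (L *ᵥ w)) := by
    intro w
    have e : ∑ i, ∑ j, (-(L i j)) * ((w i - w j) ^ 2)
        = (2 * ∑ i, ∑ j, L i j * (w i * w j)) - (∑ i, ∑ j, L i j * (w i ^ 2))
          - ∑ i, ∑ j, L i j * (w j ^ 2) := by
      rw [Finset.mul_sum, ← Finset.sum_sub_distrib, ← Finset.sum_sub_distrib]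
      refine Finset.sum_congr rfl fun i _ => ?_
      rw [Finset.mul_sum, ← Finset.sum_sub_distrib, ← Finset.sum_sub_distrib]
      exact Finset.sum_congr rfl fun j _ => by ring
    rw [e, zero1 (fun i => w i ^ 2), zero2 (fun j => w j ^ 2), expand w w]
    ring
  have quadnn : ∀ w : Fin n → ℝ, 0 ≤ w ⬝ᵥ (L *ᵥ w) := by
    intro w
    have hnn : 0 ≤ ∑ i, ∑ j, (-(L i j)) * ((w i - w j) ^ 2) := by
      refine Finset.sum_nonneg fun i _ => Finset.sum_nonneg fun j _ => ?_
      rcases eq_or_ne i j with rfl | hij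
      · simp
      · exact mul_nonneg (by linarith [hoff i j hij]) (sq_nonneg _)
    rw [eqT w] at hnn; linarith
  have main : ξ * (y ⬝ᵥ (L *ᵥ y)) ≤ y ⬝ᵥ (L *ᵥ x) := by
    obtain ⟨Φ, hΦ⟩ := exists_potential hξ hcoco (Finset.image x Finset.univ)
    have per : ∀ i j, (-(L i j)) * ((Φ (x i) - Φ (x j)) + ξ / 2 * (y i - y j) ^ 2)
        ≤ (-(L i j)) * (y i * (x i - x j)) := by
      intro i j
      rcases eq_or_ne i j with rfl | hij
      · simp
      · refine mul_le_mul_of_nonneg_left ?_ (by linarith [hoff i j hij])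
        have := hΦ (x i) (Finset.mem_image_of_mem x (Finset.mem_univ i))
          (x j) (Finset.mem_image_of_mem x (Finset.mem_univ j))
        rw [hxy i, hxy j]
        linarith
    have sum_le : ∑ i, ∑ j, (-(L i j)) * ((Φ (x i) - Φ (x j)) + ξ / 2 * (y i - y j) ^ 2)
        ≤ ∑ i, ∑ j, (-(L i j)) * (y i * (x i - x j)) :=
      Finset.sum_le_sum fun i _ => Finset.sum_le_sum fun j _ => per i j
    have lhs_eq : ∑ i, ∑ j, (-(L i j)) * ((Φ (x i) - Φ (x j)) + ξ / 2 * (y i - y j) ^ 2)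
        = (∑ i, ∑ j, (L i j * (Φ (x j)) - L i j * (Φ (x i))))
          + ξ / 2 * ∑ i, ∑ j, (-(L i j)) * ((y i - y j) ^ 2) := by
      rw [Finset.mul_sum, ← Finset.sum_add_distrib]
      refine Finset.sum_congr rfl fun i _ => ?_
      rw [Finset.mul_sum, ← Finset.sum_add_distrib]
      exact Finset.sum_congr rfl fun j _ => by ring
    have zeroC : ∑ i, ∑ j, (L i j * (Φ (x j)) - L i j * (Φ (x i))) = 0 := by
      have e : ∑ i, ∑ j, (L i j * (Φ (x j)) - L i j * (Φ (x i)))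
          = (∑ i, ∑ j, L i j * (Φ (x j))) - ∑ i, ∑ j, L i j * (Φ (x i)) := by
        rw [← Finset.sum_sub_distrib]
        exact Finset.sum_congr rfl fun i _ => Finset.sum_sub_distrib _ _
      rw [e, zero1 (fun i => Φ (x i)), zero2 (fun j => Φ (x j)), sub_self]
    rw [lhs_eq, zeroC, zero_add, eqT y, eqA] at sum_le
    linarith
  have hPy : ∀ i, (P *ᵥ y) i = y i - (n : ℝ)⁻¹ * ∑ j, y j := by
    intro i
    simp [P, sub_mulVec, mulVec, dotProduct, Matrix.smul_apply, one_apply, Finset.mul_sum,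
      sub_mul, Finset.sum_sub_distrib, ite_mul, one_mul, zero_mul, Finset.sum_ite_eq]
  rcases eq_or_lt_of_le
      (Finset.sum_nonneg fun i (_ : i ∈ Finset.univ) => sq_nonneg ((P *ᵥ y) i)) with h0 | hspos
  · rw [← h0, mul_zero]
    exact le_trans (mul_nonneg hξ.le (quadnn y)) main
  · have hn0 : (n : ℝ) ≠ 0 := by
      intro hn
      have hn' : n = 0 := by exact_mod_cast hn
      subst hn'
      simp at hspos
    have sumPy : ∑ i, (P *ᵥ y) i = 0 := by
      rw [Finset.sum_congr rfl fun i _ => hPy i]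
      rw [Finset.sum_sub_distrib, Finset.sum_const, Finset.card_univ, Fintype.card_fin,
        nsmul_eq_mul]
      field_simp
      ring
    have hPLP : (P *ᵥ y) ⬝ᵥ (L *ᵥ (P *ᵥ y)) = y ⬝ᵥ (L *ᵥ y) := by
      rw [expand, expand]
      have split : ∑ i, ∑ j, L i j * ((P *ᵥ y) i * (P *ᵥ y) j)
          = (((∑ i, ∑ j, L i j * (y i * y j))
              - ∑ i, ∑ j, L i j * (((n : ℝ)⁻¹ * ∑ k, y k) * y j))
              - ∑ i, ∑ j, L i j * (((n : ℝ)⁻¹ * ∑ k, y k) * y i))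
              + ∑ i, ∑ j, L i j * (((n : ℝ)⁻¹ * ∑ k, y k) * ((n : ℝ)⁻¹ * ∑ k, y k)) := by
        rw [← Finset.sum_sub_distrib, ← Finset.sum_sub_distrib, ← Finset.sum_add_distrib]
        refine Finset.sum_congr rfl fun i _ => ?_
        rw [← Finset.sum_sub_distrib, ← Finset.sum_sub_distrib, ← Finset.sum_add_distrib]
        refine Finset.sum_congr rfl fun j _ => ?_
        rw [hPy i, hPy j]
        ring
      rw [split, zero2 (fun j => ((n : ℝ)⁻¹ * ∑ k, y k) * y j),
        zero1 (fun i => ((n : ℝ)⁻¹ * ∑ k, y k) * y i),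
        zero1 (fun _ => ((n : ℝ)⁻¹ * ∑ k, y k) * ((n : ℝ)⁻¹ * ∑ k, y k))]
      ring
    set s := ∑ i, ((P *ᵥ y) i) ^ 2 with hs
    have hsqrt : 0 < Real.sqrt s := Real.sqrt_pos.2 hspos
    set z : Fin n → ℝ := fun i => (Real.sqrt s)⁻¹ * (P *ᵥ y) i with hz
    have hsum : ∑ i, z i = 0 := by
      rw [hz, ← Finset.mul_sum, sumPy, mul_zero]
    have hnorm : ∑ i, (z i) ^ 2 = 1 := by
      have e : ∑ i, (z i) ^ 2 = (Real.sqrt s)⁻¹ ^ 2 * ∑ i, ((P *ᵥ y) i) ^ 2 := by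
        rw [Finset.mul_sum]
        exact Finset.sum_congr rfl fun i _ => by rw [hz]; ring
      rw [e, ← hs, inv_pow, Real.sq_sqrt hspos.le]
      exact inv_mul_cancel₀ (ne_of_gt hspos)
    have hzz : z ⬝ᵥ (L *ᵥ z) = s⁻¹ * (y ⬝ᵥ (L *ᵥ y)) := by
      have e : z ⬝ᵥ (L *ᵥ z)
          = (Real.sqrt s)⁻¹ ^ 2 * ((P *ᵥ y) ⬝ᵥ (L *ᵥ (P *ᵥ y))) := by
        rw [expand, expand, Finset.mul_sum]
        refine Finset.sum_congr rfl fun i _ => ?_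
        rw [Finset.mul_sum]
        exact Finset.sum_congr rfl fun j _ => by rw [hz]; ring
      rw [e, hPLP, inv_pow, Real.sq_sqrt hspos.le]
    have hbdd : BddBelow {r : ℝ | ∃ w : Fin n → ℝ,
        (∑ i, w i) = 0 ∧ (∑ i, (w i) ^ 2) = 1 ∧ r = w ⬝ᵥ (L *ᵥ w)} := by
      refine ⟨0, fun r hr => ?_⟩
      obtain ⟨w, _, _, rfl⟩ := hr
      exact quadnn w
    have hlam : algConn L ≤ z ⬝ᵥ (L *ᵥ z) := by
      rw [algConn]
      exact csInf_le hbdd ⟨z, hsum, hnorm, rfl⟩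
    have hlams : algConn L * s ≤ y ⬝ᵥ (L *ᵥ y) := by
      have h1 : algConn L ≤ s⁻¹ * (y ⬝ᵥ (L *ᵥ y)) := hzz ▸ hlam
      have h2 := mul_le_mul_of_nonneg_right h1 hspos.le
      have h3 : s⁻¹ * (y ⬝ᵥ (L *ᵥ y)) * s = y ⬝ᵥ (L *ᵥ y) := by
        field_simp
      linarith [h2, h3.le]
    calc ξ * algConn L * s = ξ * (algConn L * s) := by ring
      _ ≤ ξ * (y ⬝ᵥ (L *ᵥ y)) := mul_le_mul_of_nonneg_left hlams hξ.le
      _ ≤ y ⬝ᵥ (L *ᵥ x) := main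
end

section
/- Let \tilde{\gamma}_1,...,\tilde{\gamma}_7 > 0 and let E be the 7\times 7 matrix with diagonal entries -\tilde{\gamma}_1,...,-\tilde{\gamma}_7, entries E_{21} = E_{32} = E_{43} = E_{51} = E_{65} = E_{76} = 1, entries E_{14} = E_{17} = -1, and zeros elsewhere (the dissipativity matrix of the branched interconnection in which species 1 feeds two chains 1\to2\to3\to4 and 1\to5\to6\to7, each of whose ends inhibits species 1). If 1/(\tilde{\gamma}_1 \tilde{\gamma}_2 \tilde{\gamma}_3 \tilde{\gamma}_4) + 1/(\tilde{\gamma}_1 \tilde{\gamma}_5 \tilde{\gamma}_6 \tilde{\gamma}_7) < \sec(\pi/4)^4, then E is diagonally stable. In particular, with \tilde{\gamma}_k = \gamma_k + \lambda_k, the condition (1/(\gamma_1+\lambda_1))(\prod_{k=2}^4 1/(\gamma_k+\lambda_k) + \prod_{k=5}^7 1/(\gamma_k+\lambda_k)) < \sec(\pi/4)^4 guarantees diagonal stability of the dissipativity matrix for this branched structure. -/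
open Matrix

/-- A square matrix `E` is diagonally stable if `Eᵀ D + D E < 0` for some positive
diagonal `D`. -/
def DiagStable {N : ℕ} (E : Matrix (Fin N) (Fin N) ℝ) : Prop :=
  ∃ d : Fin N → ℝ, (∀ k, 0 < d k) ∧
    (-(Eᵀ * Matrix.diagonal d + Matrix.diagonal d * E)).PosDef

/-- Dissipativity matrix of the branched interconnection in which species 1 feeds the
two chains `1→2→3→4` and `1→5→6→7`, each of whose ends inhibits species 1. -/
noncomputable def Ebr (g : Fin 7 → ℝ) : Matrix (Fin 7) (Fin 7) ℝ :=
  !![-g 0,     0,     0,    -1,     0,     0,    -1;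
         1, -g 1,     0,     0,     0,     0,     0;
         0,     1, -g 2,     0,     0,     0,     0;
         0,     0,     1, -g 3,     0,     0,     0;
         1,     0,     0,     0, -g 4,     0,     0;
         0,     0,     0,     0,     1, -g 5,     0;
         0,     0,     0,     0,     0,     1, -g 6]

lemma cyc_id (r s h0 h1 h2 h3 x0 x1 x2 x3 : ℝ) (hr : r^2 = 2)
    (hc : s^4*(h0*h1*h2*h3) = 1) :
    2*h0*x0^2 + 2*(s^2*h0*h1)*h1*x1^2 + 2*(s^4*h0*h1^2*h2)*h2*x2^2
      + 2*(s^6*h0*h1^2*h2^2*h3)*h3*x3^2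
      - 2*(s^2*h0*h1)*x0*x1 - 2*(s^4*h0*h1^2*h2)*x1*x2 - 2*(s^6*h0*h1^2*h2^2*h3)*x2*x3
      + 2*x0*x3
    = (2 - r*s)*(h0*x0^2 + s^2*h0*h1^2*x1^2 + s^4*h0*h1^2*h2^2*x2^2 + s^6*h0*h1^2*h2^2*h3^2*x3^2)
      + (s*r/2)*h0*((x0 - r*s*h1*x1 + s^2*h1*h2*x2)^2
        + (x0 - s^2*h1*h2*x2 + r*s^3*h1*h2*h3*x3)^2) := by
  linear_combination (-(h0*((r/2)*s^3*h1^2*x1^2 + (r/2)*s^7*h1^2*h2^2*h3^2*x3^2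
      - s^2*h1*x0*x1 - s^4*h1^2*h2*x1*x2 + s^4*h1*h2*h3*x0*x3
      - s^6*h1^2*h2^2*h3*x2*x3))) * hr + (-(2*x0*x3)) * hc

lemma cyc_ge (r s h0 h1 h2 h3 x0 x1 x2 x3 : ℝ) (hr : r^2 = 2) (hr0 : 0 ≤ r) (hs : 0 ≤ s)
    (hh0 : 0 ≤ h0) (hc : s^4*(h0*h1*h2*h3) = 1) :
    (2 - r*s)*(h0*x0^2 + s^2*h0*h1^2*x1^2 + s^4*h0*h1^2*h2^2*x2^2 + s^6*h0*h1^2*h2^2*h3^2*x3^2)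
    ≤ 2*h0*x0^2 + 2*(s^2*h0*h1)*h1*x1^2 + 2*(s^4*h0*h1^2*h2)*h2*x2^2
      + 2*(s^6*h0*h1^2*h2^2*h3)*h3*x3^2
      - 2*(s^2*h0*h1)*x0*x1 - 2*(s^4*h0*h1^2*h2)*x1*x2 - 2*(s^6*h0*h1^2*h2^2*h3)*x2*x3
      + 2*x0*x3 := by
  rw [cyc_id r s h0 h1 h2 h3 x0 x1 x2 x3 hr hc]
  have h1' : 0 ≤ (s*r/2)*h0*((x0 - r*s*h1*x1 + s^2*h1*h2*x2)^2
      + (x0 - s^2*h1*h2*x2 + r*s^3*h1*h2*h3*x3)^2) := by positivity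
  linarith

lemma quadform (g d x : Fin 7 → ℝ) :
    dotProduct (star x) ((-((Ebr g)ᵀ * Matrix.diagonal d + Matrix.diagonal d * Ebr g)) *ᵥ x)
    = 2*(d 0*g 0)*x 0^2 + 2*(d 1*g 1)*x 1^2 + 2*(d 2*g 2)*x 2^2 + 2*(d 3*g 3)*x 3^2
      + 2*(d 4*g 4)*x 4^2 + 2*(d 5*g 5)*x 5^2 + 2*(d 6*g 6)*x 6^2
      - 2*d 1*x 0*x 1 - 2*d 2*x 1*x 2 - 2*d 3*x 2*x 3 + 2*d 0*x 0*x 3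
      - 2*d 4*x 0*x 4 - 2*d 5*x 4*x 5 - 2*d 6*x 5*x 6 + 2*d 0*x 0*x 6 := by
  simp [Ebr, dotProduct, Matrix.mulVec, Matrix.mul_apply, Fin.sum_univ_succ,
    Matrix.diagonal, Matrix.transpose,
    show (Fin.succ 2 : Fin 7) = 3 from rfl, show (Fin.succ 3 : Fin 7) = 4 from rfl,
    show (Fin.succ 4 : Fin 7) = 5 from rfl, show (Fin.succ 5 : Fin 7) = 6 from rfl,
    show (Fin.succ 2 : Fin 4) = 3 from rfl, show (Fin.succ 3 : Fin 5) = 4 from rfl,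
    show (Fin.succ 4 : Fin 6) = 5 from rfl, show ((3:Fin 4).succ : Fin 5) = 4 from rfl,
    show ((3:Fin 5).succ : Fin 6) = 4 from rfl, show ((4:Fin 5).succ : Fin 6) = 5 from rfl,
    show ((3:Fin 6).succ : Fin 7) = 4 from rfl, show ((4:Fin 6).succ : Fin 7) = 5 from rfl,
    show ((5:Fin 6).succ : Fin 7) = 6 from rfl, show (Fin.succ 2 : Fin 5) = 3 from rfl,
    show (Fin.succ 2 : Fin 6) = 3 from rfl]
  ring

lemma ebr_herm (g d : Fin 7 → ℝ) :
    (-((Ebr g)ᵀ * Matrix.diagonal d + Matrix.diagonal d * Ebr g)).IsHermitian := by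
  have : (-((Ebr g)ᵀ * Matrix.diagonal d + Matrix.diagonal d * Ebr g))ᴴ
      = -((Ebr g)ᵀ * Matrix.diagonal d + Matrix.diagonal d * Ebr g) := by
    have h : ∀ A : Matrix (Fin 7) (Fin 7) ℝ, Aᴴ = Aᵀ := fun A => rfl
    simp only [conjTranspose_neg, conjTranspose_add, conjTranspose_mul, h,
      Matrix.transpose_transpose, Matrix.diagonal_transpose]
    simp only [Matrix.transpose_neg, Matrix.transpose_add, Matrix.transpose_mul,
      Matrix.transpose_transpose, Matrix.diagonal_transpose]
    rw [add_comm]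
  exact this

set_option maxHeartbeats 1600000 in
lemma part1 (g : Fin 7 → ℝ) (hg : ∀ k, 0 < g k)
    (hlt : 1 / (g 0 * g 1 * g 2 * g 3) + 1 / (g 0 * g 4 * g 5 * g 6)
        < (1 / Real.cos (Real.pi / 4)) ^ 4) :
    DiagStable (Ebr g) := by
  have hr2 : (Real.sqrt 2)^2 = 2 := Real.sq_sqrt (by norm_num)
  have hr0 : (0:ℝ) < Real.sqrt 2 := Real.sqrt_pos.mpr (by norm_num)
  have hcos : (1 / Real.cos (Real.pi / 4) : ℝ) ^ 4 = 4 := by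
    rw [Real.cos_pi_div_four]
    have hne : Real.sqrt 2 ≠ 0 := ne_of_gt hr0
    field_simp
    nlinarith [hr2]
  rw [hcos] at hlt
  set r : ℝ := Real.sqrt 2 with hr_def
  have hP1 : (0:ℝ) < g 0 * g 1 * g 2 * g 3 := by
    have := hg 0; have := hg 1; have := hg 2; have := hg 3; positivity
  have hP2 : (0:ℝ) < g 0 * g 4 * g 5 * g 6 := by
    have := hg 0; have := hg 1; have := hg 4; have := hg 5; have := hg 6; positivity
  set a : ℝ := 1 / (g 0 * g 1 * g 2 * g 3) with ha_def
  set b : ℝ := 1 / (g 0 * g 4 * g 5 * g 6) with hb_def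
  have ha : 0 < a := by rw [ha_def]; positivity
  have hb : 0 < b := by rw [hb_def]; positivity
  have hS : 0 < a + b := by linarith
  have hS4 : a + b < 4 := hlt
  set s : ℝ := Real.sqrt (Real.sqrt (a + b)) with hs_def
  have hsq : 0 < Real.sqrt (a + b) := Real.sqrt_pos.mpr hS
  have hs0 : 0 < s := Real.sqrt_pos.mpr hsq
  have hs2 : s^2 = Real.sqrt (a + b) := Real.sq_sqrt hsq.le
  have hs4 : s^4 = a + b := by
    have : s^4 = (s^2)^2 := by ring
    rw [this, hs2, Real.sq_sqrt hS.le]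
  have hsqlt : Real.sqrt (a + b) < 2 := by
    rw [show (2:ℝ) = Real.sqrt 4 by
      rw [show (4:ℝ) = 2^2 by norm_num, Real.sqrt_sq (by norm_num)]]
    exact Real.sqrt_lt_sqrt hS.le hS4
  have hrs : r * s < 2 := by
    have h1 : (r*s)^2 = 2 * Real.sqrt (a+b) := by
      rw [mul_pow, hr2, hs2]
    nlinarith [mul_pos hr0 hs0]
  set hA : ℝ := a / (a + b) * g 0 with hA_def
  set hB : ℝ := b / (a + b) * g 0 with hB_def
  have hhA : 0 < hA := by rw [hA_def]; have := hg 0; positivity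
  have hhB : 0 < hB := by rw [hB_def]; have := hg 0; positivity
  have hAB : hA + hB = g 0 := by
    rw [hA_def, hB_def]
    field_simp
  have hcA : s^4 * (hA * g 1 * g 2 * g 3) = 1 := by
    rw [hs4, hA_def, ha_def, hb_def]
    have := hg 0; have := hg 1; have := hg 2; have := hg 3; have := hg 4; have := hg 5; have := hg 6
    field_simp
  have hcB : s^4 * (hB * g 4 * g 5 * g 6) = 1 := by
    rw [hs4, hB_def, ha_def, hb_def]
    have := hg 0; have := hg 1; have := hg 2; have := hg 3; have := hg 4; have := hg 5; have := hg 6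
    field_simp
  refine ⟨![1, s^2*hA*g 1, s^4*hA*(g 1)^2*g 2, s^6*hA*(g 1)^2*(g 2)^2*g 3,
      s^2*hB*g 4, s^4*hB*(g 4)^2*g 5, s^6*hB*(g 4)^2*(g 5)^2*g 6], ?_, posDef_iff_dotProduct_mulVec.mpr ⟨?_, ?_⟩⟩
  · intro k
    fin_cases k
    · norm_num
    · show (0:ℝ) < s^2*hA*g 1
      exact mul_pos (mul_pos (pow_pos hs0 2) hhA) (hg 1)
    · show (0:ℝ) < s^4*hA*(g 1)^2*g 2
      exact mul_pos (mul_pos (mul_pos (pow_pos hs0 4) hhA) (pow_pos (hg 1) 2)) (hg 2)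
    · show (0:ℝ) < s^6*hA*(g 1)^2*(g 2)^2*g 3
      exact mul_pos (mul_pos (mul_pos (mul_pos (pow_pos hs0 6) hhA) (pow_pos (hg 1) 2))
        (pow_pos (hg 2) 2)) (hg 3)
    · show (0:ℝ) < s^2*hB*g 4
      exact mul_pos (mul_pos (pow_pos hs0 2) hhB) (hg 4)
    · show (0:ℝ) < s^4*hB*(g 4)^2*g 5
      exact mul_pos (mul_pos (mul_pos (pow_pos hs0 4) hhB) (pow_pos (hg 4) 2)) (hg 5)
    · show (0:ℝ) < s^6*hB*(g 4)^2*(g 5)^2*g 6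
      exact mul_pos (mul_pos (mul_pos (mul_pos (pow_pos hs0 6) hhB) (pow_pos (hg 4) 2))
        (pow_pos (hg 5) 2)) (hg 6)
  · exact ebr_herm g _
  · intro x hx
    rw [quadform]
    simp only [show (![1, s^2*hA*g 1, s^4*hA*(g 1)^2*g 2, s^6*hA*(g 1)^2*(g 2)^2*g 3,
        s^2*hB*g 4, s^4*hB*(g 4)^2*g 5, s^6*hB*(g 4)^2*(g 5)^2*g 6] : Fin 7 → ℝ) 0 = 1 from rfl,
      show (![1, s^2*hA*g 1, s^4*hA*(g 1)^2*g 2, s^6*hA*(g 1)^2*(g 2)^2*g 3,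
        s^2*hB*g 4, s^4*hB*(g 4)^2*g 5, s^6*hB*(g 4)^2*(g 5)^2*g 6] : Fin 7 → ℝ) 1
        = s^2*hA*g 1 from rfl,
      show (![1, s^2*hA*g 1, s^4*hA*(g 1)^2*g 2, s^6*hA*(g 1)^2*(g 2)^2*g 3,
        s^2*hB*g 4, s^4*hB*(g 4)^2*g 5, s^6*hB*(g 4)^2*(g 5)^2*g 6] : Fin 7 → ℝ) 2
        = s^4*hA*(g 1)^2*g 2 from rfl,
      show (![1, s^2*hA*g 1, s^4*hA*(g 1)^2*g 2, s^6*hA*(g 1)^2*(g 2)^2*g 3,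
        s^2*hB*g 4, s^4*hB*(g 4)^2*g 5, s^6*hB*(g 4)^2*(g 5)^2*g 6] : Fin 7 → ℝ) 3
        = s^6*hA*(g 1)^2*(g 2)^2*g 3 from rfl,
      show (![1, s^2*hA*g 1, s^4*hA*(g 1)^2*g 2, s^6*hA*(g 1)^2*(g 2)^2*g 3,
        s^2*hB*g 4, s^4*hB*(g 4)^2*g 5, s^6*hB*(g 4)^2*(g 5)^2*g 6] : Fin 7 → ℝ) 4
        = s^2*hB*g 4 from rfl,
      show (![1, s^2*hA*g 1, s^4*hA*(g 1)^2*g 2, s^6*hA*(g 1)^2*(g 2)^2*g 3,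
        s^2*hB*g 4, s^4*hB*(g 4)^2*g 5, s^6*hB*(g 4)^2*(g 5)^2*g 6] : Fin 7 → ℝ) 5
        = s^4*hB*(g 4)^2*g 5 from rfl,
      show (![1, s^2*hA*g 1, s^4*hA*(g 1)^2*g 2, s^6*hA*(g 1)^2*(g 2)^2*g 3,
        s^2*hB*g 4, s^4*hB*(g 4)^2*g 5, s^6*hB*(g 4)^2*(g 5)^2*g 6] : Fin 7 → ℝ) 6
        = s^6*hB*(g 4)^2*(g 5)^2*g 6 from rfl]
    -- abbreviate cycle bounds
    have hA4 := cyc_ge r s hA (g 1) (g 2) (g 3) (x 0) (x 1) (x 2) (x 3)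
      hr2 hr0.le hs0.le hhA.le hcA
    have hB4 := cyc_ge r s hB (g 4) (g 5) (g 6) (x 0) (x 4) (x 5) (x 6)
      hr2 hr0.le hs0.le hhB.le hcB
    set SA : ℝ := hA*x 0^2 + s^2*hA*g 1^2*x 1^2 + s^4*hA*g 1^2*g 2^2*x 2^2
      + s^6*hA*g 1^2*g 2^2*g 3^2*x 3^2 with hSA_def
    set SB : ℝ := hB*x 0^2 + s^2*hB*g 4^2*x 4^2 + s^4*hB*g 4^2*g 5^2*x 5^2
      + s^6*hB*g 4^2*g 5^2*g 6^2*x 6^2 with hSB_def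
    set QA : ℝ := 2*hA*x 0^2 + 2*(s^2*hA*g 1)*g 1*x 1^2 + 2*(s^4*hA*g 1^2*g 2)*g 2*x 2^2
      + 2*(s^6*hA*g 1^2*g 2^2*g 3)*g 3*x 3^2
      - 2*(s^2*hA*g 1)*x 0*x 1 - 2*(s^4*hA*g 1^2*g 2)*x 1*x 2
      - 2*(s^6*hA*g 1^2*g 2^2*g 3)*x 2*x 3 + 2*x 0*x 3 with hQA_def
    set QB : ℝ := 2*hB*x 0^2 + 2*(s^2*hB*g 4)*g 4*x 4^2 + 2*(s^4*hB*g 4^2*g 5)*g 5*x 5^2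
      + 2*(s^6*hB*g 4^2*g 5^2*g 6)*g 6*x 6^2
      - 2*(s^2*hB*g 4)*x 0*x 4 - 2*(s^4*hB*g 4^2*g 5)*x 4*x 5
      - 2*(s^6*hB*g 4^2*g 5^2*g 6)*x 5*x 6 + 2*x 0*x 6 with hQB_def
    -- the total quadratic form splits as the two cycle forms
    have hsum :
        2*(1*g 0)*x 0^2 + 2*(s^2*hA*g 1*g 1)*x 1^2 + 2*(s^4*hA*(g 1)^2*g 2*g 2)*x 2^2
          + 2*(s^6*hA*(g 1)^2*(g 2)^2*g 3*g 3)*x 3^2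
          + 2*(s^2*hB*g 4*g 4)*x 4^2 + 2*(s^4*hB*(g 4)^2*g 5*g 5)*x 5^2
          + 2*(s^6*hB*(g 4)^2*(g 5)^2*g 6*g 6)*x 6^2
          - 2*(s^2*hA*g 1)*x 0*x 1 - 2*(s^4*hA*(g 1)^2*g 2)*x 1*x 2
          - 2*(s^6*hA*(g 1)^2*(g 2)^2*g 3)*x 2*x 3 + 2*1*x 0*x 3
          - 2*(s^2*hB*g 4)*x 0*x 4 - 2*(s^4*hB*(g 4)^2*g 5)*x 4*x 5
          - 2*(s^6*hB*(g 4)^2*(g 5)^2*g 6)*x 5*x 6 + 2*1*x 0*x 6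
        = QA + QB := by
      rw [hQA_def, hQB_def]
      linear_combination (-(2*x 0^2)) * hAB
    -- positivity of the diagonal comparison form
    have c1 : 0 < s^2*hA*(g 1)^2 := by have := hg 1; positivity
    have c2 : 0 < s^4*hA*(g 1)^2*(g 2)^2 := by have := hg 1; have := hg 2; positivity
    have c3 : 0 < s^6*hA*(g 1)^2*(g 2)^2*(g 3)^2 := by
      have := hg 1; have := hg 2; have := hg 3; positivity
    have c4 : 0 < s^2*hB*(g 4)^2 := by have := hg 4; positivity
    have c5 : 0 < s^4*hB*(g 4)^2*(g 5)^2 := by have := hg 4; have := hg 5; positivity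
    have c6 : 0 < s^6*hB*(g 4)^2*(g 5)^2*(g 6)^2 := by
      have := hg 4; have := hg 5; have := hg 6; positivity
    have hSig : 0 < SA + SB := by
      rw [hSA_def, hSB_def]
      obtain ⟨k, hk⟩ := Function.ne_iff.mp hx
      have t0 : 0 ≤ hA*x 0^2 := mul_nonneg hhA.le (sq_nonneg _)
      have t0' : 0 ≤ hB*x 0^2 := mul_nonneg hhB.le (sq_nonneg _)
      have t1 : 0 ≤ s^2*hA*(g 1)^2*x 1^2 := mul_nonneg c1.le (sq_nonneg _)
      have t2 : 0 ≤ s^4*hA*(g 1)^2*(g 2)^2*x 2^2 := mul_nonneg c2.le (sq_nonneg _)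
      have t3 : 0 ≤ s^6*hA*(g 1)^2*(g 2)^2*(g 3)^2*x 3^2 := mul_nonneg c3.le (sq_nonneg _)
      have t4 : 0 ≤ s^2*hB*(g 4)^2*x 4^2 := mul_nonneg c4.le (sq_nonneg _)
      have t5 : 0 ≤ s^4*hB*(g 4)^2*(g 5)^2*x 5^2 := mul_nonneg c5.le (sq_nonneg _)
      have t6 : 0 ≤ s^6*hB*(g 4)^2*(g 5)^2*(g 6)^2*x 6^2 := mul_nonneg c6.le (sq_nonneg _)
      fin_cases k
      · have hk2 : (0:ℝ) < x 0^2 := pow_two_pos_of_ne_zero (by simpa using hk)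
        linarith only [t0, t0', t1, t2, t3, t4, t5, t6, mul_pos hhA hk2]
      · have hk2 : (0:ℝ) < x 1^2 := pow_two_pos_of_ne_zero (by simpa using hk)
        linarith only [t0, t0', t1, t2, t3, t4, t5, t6, mul_pos c1 hk2]
      · have hk2 : (0:ℝ) < x 2^2 := pow_two_pos_of_ne_zero (by simpa using hk)
        linarith only [t0, t0', t1, t2, t3, t4, t5, t6, mul_pos c2 hk2]
      · have hk2 : (0:ℝ) < x 3^2 := pow_two_pos_of_ne_zero (by simpa using hk)
        linarith only [t0, t0', t1, t2, t3, t4, t5, t6, mul_pos c3 hk2]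
      · have hk2 : (0:ℝ) < x 4^2 := pow_two_pos_of_ne_zero (by simpa using hk)
        linarith only [t0, t0', t1, t2, t3, t4, t5, t6, mul_pos c4 hk2]
      · have hk2 : (0:ℝ) < x 5^2 := pow_two_pos_of_ne_zero (by simpa using hk)
        linarith only [t0, t0', t1, t2, t3, t4, t5, t6, mul_pos c5 hk2]
      · have hk2 : (0:ℝ) < x 6^2 := pow_two_pos_of_ne_zero (by simpa using hk)
        linarith only [t0, t0', t1, t2, t3, t4, t5, t6, mul_pos c6 hk2]
    have h2rs : 0 < 2 - r * s := by linarith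
    have final : (0:ℝ) < QA + QB := by
      calc (0:ℝ) < (2 - r*s) * (SA + SB) := mul_pos h2rs hSig
        _ = (2 - r*s) * SA + (2 - r*s) * SB := by ring
        _ ≤ QA + QB := add_le_add hA4 hB4
    linarith only [hsum.ge, hsum.le, final]

/-- If `γ̃ₖ > 0` and
`1/(γ̃₁γ̃₂γ̃₃γ̃₄) + 1/(γ̃₁γ̃₅γ̃₆γ̃₇) < sec(π/4)⁴`, then the branched dissipativity
matrix is diagonally stable; in particular with `γ̃ₖ = γₖ + λₖ`. -/
theorem statement13 :
    (∀ g : Fin 7 → ℝ, (∀ k, 0 < g k) →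
      1 / (g 0 * g 1 * g 2 * g 3) + 1 / (g 0 * g 4 * g 5 * g 6)
          < (1 / Real.cos (Real.pi / 4)) ^ 4 →
      DiagStable (Ebr g)) ∧
    (∀ γ lam : Fin 7 → ℝ, (∀ k, 0 < γ k + lam k) →
      (1 / (γ 0 + lam 0)) *
          (1 / ((γ 1 + lam 1) * (γ 2 + lam 2) * (γ 3 + lam 3))
            + 1 / ((γ 4 + lam 4) * (γ 5 + lam 5) * (γ 6 + lam 6)))
          < (1 / Real.cos (Real.pi / 4)) ^ 4 →
      DiagStable (Ebr fun k => γ k + lam k)) := by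
  constructor
  · exact part1
  · intro γ lam hpos hlt
    set g : Fin 7 → ℝ := fun k => γ k + lam k with hg_def
    have hg : ∀ k, 0 < g k := hpos
    apply part1 g hg
    have hkey : 1 / (g 0 * g 1 * g 2 * g 3) + 1 / (g 0 * g 4 * g 5 * g 6)
        = (1 / g 0) * (1 / (g 1 * g 2 * g 3) + 1 / (g 4 * g 5 * g 6)) := by
      have h0 := hg 0; have h1 := hg 1; have h2 := hg 2; have h3 := hg 3
      have h4 := hg 4; have h5 := hg 5; have h6 := hg 6
      field_simp
    rw [hkey]
    exact hlt
end
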